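/- Let (X,p) be a context-free grammar in Greibach normal form and S ∈ P_ω(X*). Then the language assigned to S by the final homomorphism from the grammar automaton equals ⋃_{s ∈ S} { w ∈ A* | s ⇒* w }. -/

import Mathlib

/-- Language concatenation `S·T = { st | s ∈ S, t ∈ T }`. -/
def lcat {Y : Type} (S T : Set (List Y)) : Set (List Y) :=
  Set.image2 (· ++ ·) S T

/-- `i : B → P(Y*)`, sending `1` to `{ε}` and `0` to `∅` (Booleans as `Prop`). -/
def iB {Y : Type} (p : Prop) : Set (List Y) := {w | w = [] ∧ p}

section GrammarAutomaton

variable {X A : Type} (o : X → Prop) (δ : X → A → Set (List X))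

/-- Output `ô({s})` of a single word of nonterminals:
`ô({ε}) = 1`, `ô({xw}) = o(x) ∧ ô({w})`. -/
def oWord : List X → Prop
  | [] => True
  | x :: w => o x ∧ oWord w

/-- Derivative `{s}_a` of a single word of nonterminals:
`{ε}_a = ∅`, `{xw}_a = x_a·{w} ∪ i(o(x))·{w}_a`. -/
def dWord : List X → A → Set (List X)
  | [], _ => ∅
  | x :: w, a => lcat (δ x a) {w} ∪ lcat (iB (o x)) (dWord w a)

/-- Output `ô(S) = ⋁_{s ∈ S} ô({s})` of a language of words of nonterminals. -/
def oSet (S : Set (List X)) : Prop := ∃ s ∈ S, oWord o s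

/-- Derivative `S_a = ⋃_{s ∈ S} {s}_a`. -/
def dSet (S : Set (List X)) (a : A) : Set (List X) :=
  ⋃ s ∈ S, dWord o δ s a

/-- Iterated word derivative: `S_ε = S`, `S_{aw} = (S_a)_w`. -/
def dSetWord (S : Set (List X)) : List A → Set (List X)
  | [] => S
  | a :: w => dSetWord (dSet o δ S a) w

/-- One derivation step of the grammar in Greibach normal form determined by
`(o, δ)`: productions are `x → ε` when `o x` holds, and `x → aw` when `w ∈ δ x a`. -/
inductive GStep : List (X ⊕ A) → List (X ⊕ A) → Prop
  | eps (l r : List (X ⊕ A)) (x : X) (h : o x) :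
      GStep (l ++ Sum.inl x :: r) (l ++ r)
  | prod (l r : List (X ⊕ A)) (x : X) (a : A) (w : List X) (h : w ∈ δ x a) :
      GStep (l ++ Sum.inl x :: r) (l ++ Sum.inr a :: w.map Sum.inl ++ r)

/-- Derivability `⇒*`: the reflexive–transitive closure of single derivation steps. -/
def GDerives : List (X ⊕ A) → List (X ⊕ A) → Prop :=
  Relation.ReflTransGen (GStep o δ)

/-! ### auxiliary material -/

lemma mem_lcat {Y : Type} {S T : Set (List Y)} {w : List Y} :
    w ∈ lcat S T ↔ ∃ u ∈ S, ∃ v ∈ T, u ++ v = w := by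
  simp [lcat, Set.mem_image2]

lemma mem_lcat_iB {Y : Type} {p : Prop} {T : Set (List Y)} {w : List Y} :
    w ∈ lcat (iB p) T ↔ p ∧ w ∈ T := by
  simp only [mem_lcat, iB, Set.mem_setOf_eq]
  constructor
  · rintro ⟨u, ⟨rfl, hp⟩, v, hv, rfl⟩; exact ⟨hp, hv⟩
  · rintro ⟨hp, hw⟩; exact ⟨[], ⟨rfl, hp⟩, w, hw, rfl⟩

lemma oWord_append {s t : List X} : oWord o (s ++ t) ↔ oWord o s ∧ oWord o t := by
  induction s with
  | nil => simp [oWord]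
  | cons x s ih => simp [oWord, ih, and_assoc]

lemma lcat_assoc' {Y : Type} (S T U : Set (List Y)) :
    lcat (lcat S T) U = lcat S (lcat T U) := by
  simp only [lcat]
  exact Set.image2_assoc (fun a b c => List.append_assoc a b c)

lemma lcat_union_left' {Y : Type} (S T U : Set (List Y)) :
    lcat (S ∪ T) U = lcat S U ∪ lcat T U :=
  Set.image2_union_left

lemma lcat_union_right' {Y : Type} (S T U : Set (List Y)) :
    lcat S (T ∪ U) = lcat S T ∪ lcat S U :=
  Set.image2_union_right

lemma lcat_empty_left' {Y : Type} (T : Set (List Y)) : lcat ∅ T = ∅ :=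
  Set.image2_empty_left

lemma lcat_singleton_pair {Y : Type} (u v : List Y) :
    lcat ({u} : Set (List Y)) {v} = {u ++ v} :=
  Set.image2_singleton

lemma iB_true {Y : Type} : (iB True : Set (List Y)) = {[]} := by
  ext w; simp [iB]

lemma lcat_nil_left' {Y : Type} (T : Set (List Y)) : lcat {[]} T = T := by
  ext w; rw [mem_lcat]; simp

lemma iB_and {Y : Type} (p q : Prop) :
    (iB (p ∧ q) : Set (List Y)) = lcat (iB p) (iB q) := by
  ext w
  rw [mem_lcat]
  simp only [iB, Set.mem_setOf_eq]
  constructor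
  · rintro ⟨rfl, hp, hq⟩; exact ⟨[], ⟨rfl, hp⟩, [], ⟨rfl, hq⟩, rfl⟩
  · rintro ⟨u, ⟨rfl, hp⟩, v, ⟨rfl, hq⟩, rfl⟩; exact ⟨rfl, hp, hq⟩

lemma dWord_append (u v : List X) (a : A) :
    dWord o δ (u ++ v) a =
      lcat (dWord o δ u a) {v} ∪ lcat (iB (oWord o u)) (dWord o δ v a) := by
  induction u with
  | nil =>
    simp only [List.nil_append, dWord, oWord, lcat_empty_left', iB_true,
      lcat_nil_left', Set.empty_union]
  | cons x u ih =>
    simp only [List.cons_append, List.append_eq, dWord, oWord, ih, lcat_union_left', lcat_union_right',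
      lcat_assoc', lcat_singleton_pair, iB_and, Set.union_assoc]

lemma mem_dSet {S : Set (List X)} {a : A} {t : List X} :
    t ∈ dSet o δ S a ↔ ∃ s ∈ S, t ∈ dWord o δ s a := by
  simp [dSet]

/-- The language of a set of nonterminal words. -/
def LS (S : Set (List X)) : Set (List A) := {w | oSet o (dSetWord o δ S w)}

lemma mem_LS_nil {S : Set (List X)} : ([] : List A) ∈ LS o δ S ↔ oSet o S := Iff.rfl

lemma mem_LS_cons {S : Set (List X)} {a : A} {w : List A} :
    a :: w ∈ LS o δ S ↔ w ∈ LS o δ (dSet o δ S a) := Iff.rfl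

lemma mem_LS {w : List A} {S : Set (List X)} :
    w ∈ LS o δ S ↔ ∃ s ∈ S, w ∈ LS o δ {s} := by
  induction w generalizing S with
  | nil => simp [mem_LS_nil, oSet]
  | cons a w ih =>
    rw [mem_LS_cons, ih]
    constructor
    · rintro ⟨t, ht, hw⟩
      obtain ⟨s, hs, hts⟩ := (mem_dSet o δ).mp ht
      refine ⟨s, hs, ?_⟩
      rw [mem_LS_cons, ih]
      exact ⟨t, by simp [mem_dSet, hts], hw⟩
    · rintro ⟨s, hs, hw⟩
      rw [mem_LS_cons, ih] at hw
      obtain ⟨t, ht, hw⟩ := hw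
      rw [mem_dSet] at ht
      obtain ⟨s', hs', ht⟩ := ht
      rw [Set.mem_singleton_iff] at hs'
      exact ⟨t, (mem_dSet o δ).mpr ⟨s, hs, by rw [← hs']; exact ht⟩, hw⟩

lemma LS_empty : LS o δ (∅ : Set (List X)) = ∅ := by
  ext w
  simp only [Set.mem_empty_iff_false, iff_false]
  rw [mem_LS]; simp

lemma mem_LS_union {S T : Set (List X)} {w : List A} :
    w ∈ LS o δ (S ∪ T) ↔ w ∈ LS o δ S ∨ w ∈ LS o δ T := by
  rw [mem_LS, mem_LS o δ (S := S), mem_LS o δ (S := T)]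
  aesop

lemma mem_LS_iB_lcat {p : Prop} {T : Set (List X)} {w : List A} :
    w ∈ LS o δ (lcat (iB p) T) ↔ p ∧ w ∈ LS o δ T := by
  by_cases hp : p
  · have : lcat (iB p) T = T := by
      ext u; rw [mem_lcat_iB]; simp [hp]
    rw [this]; simp [hp]
  · have : lcat (iB p) T = ∅ := by
      ext u; rw [mem_lcat_iB]; simp [hp]
    rw [this, LS_empty]; simp [hp]

lemma oSet_lcat {S T : Set (List X)} :
    oSet o (lcat S T) ↔ oSet o S ∧ oSet o T := by
  simp only [oSet, mem_lcat]
  constructor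
  · rintro ⟨st, ⟨s, hs, t, ht, rfl⟩, h⟩
    rw [oWord_append] at h
    exact ⟨⟨s, hs, h.1⟩, ⟨t, ht, h.2⟩⟩
  · rintro ⟨⟨s, hs, h1⟩, ⟨t, ht, h2⟩⟩
    exact ⟨s ++ t, ⟨s, hs, t, ht, rfl⟩, (oWord_append o).mpr ⟨h1, h2⟩⟩

lemma dSet_lcat (S T : Set (List X)) (a : A) :
    dSet o δ (lcat S T) a =
      lcat (dSet o δ S a) T ∪ lcat (iB (oSet o S)) (dSet o δ T a) := by
  ext u
  constructor
  · intro hu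
    obtain ⟨st, hst, hu⟩ := (mem_dSet o δ).mp hu
    obtain ⟨s, hs, t, ht, rfl⟩ := mem_lcat.mp hst
    rw [dWord_append] at hu
    rcases hu with h | h
    · obtain ⟨p, hp, q, hq, rfl⟩ := mem_lcat.mp h
      rw [Set.mem_singleton_iff] at hq
      exact Or.inl (mem_lcat.mpr ⟨p, (mem_dSet o δ).mpr ⟨s, hs, hp⟩, q,
        by rw [hq]; exact ht, rfl⟩)
    · rw [mem_lcat_iB] at h
      exact Or.inr (mem_lcat_iB.mpr ⟨⟨s, hs, h.1⟩, (mem_dSet o δ).mpr ⟨t, ht, h.2⟩⟩)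
  · intro hu
    rcases hu with h | h
    · obtain ⟨p, hp, t, ht, rfl⟩ := mem_lcat.mp h
      obtain ⟨s, hs, hp⟩ := (mem_dSet o δ).mp hp
      refine (mem_dSet o δ).mpr ⟨s ++ t, mem_lcat.mpr ⟨s, hs, t, ht, rfl⟩, ?_⟩
      rw [dWord_append]
      exact Or.inl (mem_lcat.mpr ⟨p, hp, t, rfl, rfl⟩)
    · rw [mem_lcat_iB] at h
      obtain ⟨⟨s, hs, hos⟩, h2⟩ := h
      obtain ⟨t, ht, hu⟩ := (mem_dSet o δ).mp h2
      refine (mem_dSet o δ).mpr ⟨s ++ t, mem_lcat.mpr ⟨s, hs, t, ht, rfl⟩, ?_⟩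
      rw [dWord_append]
      exact Or.inr (mem_lcat_iB.mpr ⟨hos, hu⟩)

lemma mem_LS_lcat {w : List A} {S T : Set (List X)} :
    w ∈ LS o δ (lcat S T) ↔ ∃ u ∈ LS o δ S, ∃ v ∈ LS o δ T, u ++ v = w := by
  induction w generalizing S T with
  | nil =>
    rw [mem_LS_nil, oSet_lcat]
    constructor
    · rintro ⟨h1, h2⟩; exact ⟨[], h1, [], h2, rfl⟩
    · rintro ⟨u, hu, v, hv, h⟩
      obtain ⟨rfl, rfl⟩ := List.append_eq_nil_iff.mp h
      exact ⟨hu, hv⟩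
  | cons a w ih =>
    rw [mem_LS_cons, dSet_lcat, mem_LS_union, ih, mem_LS_iB_lcat]
    constructor
    · rintro (⟨u, hu, v, hv, rfl⟩ | ⟨hS, hw⟩)
      · exact ⟨a :: u, hu, v, hv, rfl⟩
      · exact ⟨[], hS, a :: w, hw, rfl⟩
    · rintro ⟨u, hu, v, hv, h⟩
      cases u with
      | nil => subst h; exact Or.inr ⟨hu, hv⟩
      | cons b u =>
        obtain ⟨rfl, rfl⟩ : b = a ∧ u ++ v = w := by
          simpa using h
        exact Or.inl ⟨u, hu, v, hv, rfl⟩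

lemma LS_nil_singleton : LS o δ ({[]} : Set (List X)) = {[]} := by
  ext w
  cases w with
  | nil => simp [mem_LS_nil, oSet, oWord]
  | cons a w =>
    simp only [Set.mem_singleton_iff, List.cons_ne_nil, iff_false]
    rw [mem_LS_cons]
    have : dSet o δ ({[]} : Set (List X)) a = ∅ := by
      ext; simp [mem_dSet, dWord]
    rw [this, LS_empty]; simp

lemma nil_mem_LS_single {x : X} : ([] : List A) ∈ LS o δ {[x]} ↔ o x := by
  simp [mem_LS_nil, oSet, oWord]

lemma cons_mem_LS_single {x : X} {a : A} {w : List A} :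
    a :: w ∈ LS o δ {[x]} ↔ ∃ t ∈ δ x a, w ∈ LS o δ {t} := by
  rw [mem_LS_cons]
  have hd : dSet o δ ({[x]} : Set (List X)) a = δ x a := by
    ext t
    simp only [mem_dSet, Set.mem_singleton_iff]
    constructor
    · rintro ⟨s, rfl, ht⟩
      rcases ht with h | h
      · obtain ⟨p, hp, q, hq, rfl⟩ := mem_lcat.mp h
        rw [Set.mem_singleton_iff] at hq; subst hq
        simpa using hp
      · rw [mem_lcat_iB] at h
        exact absurd h.2 (by simp [dWord])
    · intro ht
      exact ⟨[x], rfl, Or.inl (mem_lcat.mpr ⟨t, ht, [], rfl, by simp⟩)⟩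
  rw [hd, mem_LS]

lemma LS_cons_singleton (x : X) (s : List X) :
    LS o δ {x :: s} = lcat (LS o δ {[x]}) (LS o δ {s}) := by
  have : ({x :: s} : Set (List X)) = lcat {[x]} {s} := by
    ext; simp [mem_lcat, eq_comm]
  rw [this]
  ext w
  rw [mem_LS_lcat, mem_lcat]

/-! ### semantics of mixed words -/

def Sem : List (X ⊕ A) → Set (List A)
  | [] => {[]}
  | Sum.inl x :: γ => lcat (LS o δ {[x]}) (Sem γ)
  | Sum.inr a :: γ => lcat {[a]} (Sem γ)

lemma lcat_assoc {Y : Type} (S T U : Set (List Y)) :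
    lcat (lcat S T) U = lcat S (lcat T U) := by
  simp only [lcat]
  exact Set.image2_assoc (fun a b c => List.append_assoc a b c)

lemma Sem_append (γ γ' : List (X ⊕ A)) :
    Sem o δ (γ ++ γ') = lcat (Sem o δ γ) (Sem o δ γ') := by
  induction γ with
  | nil =>
    simp only [List.nil_append, Sem]
    ext w; rw [mem_lcat]; simp
  | cons c γ ih =>
    cases c with
    | inl x => simp only [List.cons_append, List.append_eq, Sem, ih, lcat_assoc]
    | inr a => simp only [List.cons_append, List.append_eq, Sem, ih, lcat_assoc]

lemma Sem_inl (s : List X) : Sem o δ (s.map Sum.inl) = LS o δ {s} := by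
  induction s with
  | nil => simp [Sem, LS_nil_singleton]
  | cons x s ih => rw [List.map_cons, Sem, ih, LS_cons_singleton o δ x s]

lemma Sem_inr (w : List A) : Sem o δ (w.map Sum.inr) = {w} := by
  induction w with
  | nil => simp [Sem]
  | cons a w ih =>
    rw [List.map_cons, Sem, ih]
    ext u; rw [mem_lcat]; simp [eq_comm]

lemma Sem_step {γ γ' : List (X ⊕ A)} (h : GStep o δ γ γ') :
    Sem o δ γ' ⊆ Sem o δ γ := by
  cases h with
  | eps l r x hx =>
    intro u hu
    rw [Sem_append] at hu ⊢
    obtain ⟨p, hp, q, hq, rfl⟩ := mem_lcat.mp hu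
    refine mem_lcat.mpr ⟨p, hp, q, ?_, rfl⟩
    show q ∈ Sem o δ (Sum.inl x :: r)
    rw [Sem]
    exact mem_lcat.mpr ⟨[], (nil_mem_LS_single o δ).mpr hx, q, hq, rfl⟩
  | prod l r x a wn hw =>
    intro u hu
    rw [Sem_append, Sem_append, Sem, Sem_inl] at hu
    obtain ⟨pq, hpq, v, hv, rfl⟩ := mem_lcat.mp hu
    obtain ⟨p, hp, q, hq, rfl⟩ := mem_lcat.mp hpq
    obtain ⟨a1, ha1, t, htt, rfl⟩ := mem_lcat.mp hq
    rw [Set.mem_singleton_iff] at ha1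
    rw [Sem_append]
    refine mem_lcat.mpr ⟨p, hp, (a1 ++ t) ++ v, ?_, by simp⟩
    show _ ∈ Sem o δ (Sum.inl x :: r)
    rw [Sem]
    refine mem_lcat.mpr ⟨a1 ++ t, ?_, v, hv, rfl⟩
    rw [ha1]
    exact (cons_mem_LS_single o δ).mpr ⟨wn, hw, htt⟩

lemma GDerives_mem_Sem {γ : List (X ⊕ A)} {w : List A}
    (h : GDerives o δ γ (w.map Sum.inr)) : w ∈ Sem o δ γ := by
  induction h using Relation.ReflTransGen.head_induction_on with
  | refl => rw [Sem_inr]; rfl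
  | head hstep _ ih => exact Sem_step o δ hstep ih

/-! ### completeness -/

lemma GStep_append_left (c : List (X ⊕ A)) {u v : List (X ⊕ A)}
    (h : GStep o δ u v) : GStep o δ (c ++ u) (c ++ v) := by
  cases h with
  | eps l r x hx =>
    have := GStep.eps (o := o) (δ := δ) (c ++ l) r x hx
    simpa [List.append_assoc] using this
  | prod l r x a wn hw =>
    have := GStep.prod (o := o) (δ := δ) (c ++ l) r x a wn hw
    simpa [List.append_assoc] using this

lemma GDerives_append_left (c : List (X ⊕ A)) {u v : List (X ⊕ A)}
    (h : GDerives o δ u v) : GDerives o δ (c ++ u) (c ++ v) :=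
  Relation.ReflTransGen.lift (c ++ ·) (fun _ _ hs => GStep_append_left o δ c hs) _ _ h

lemma derives_eps {s : List X} (h : oWord o s) :
    GDerives o δ (s.map Sum.inl) [] := by
  induction s with
  | nil => exact Relation.ReflTransGen.refl
  | cons x s ih =>
    refine Relation.ReflTransGen.head ?_ (ih h.2)
    have := GStep.eps (o := o) (δ := δ) [] (s.map Sum.inl) x h.1
    simpa using this

lemma derives_head {s t : List X} {a : A} (ht : t ∈ dWord o δ s a) :
    GDerives o δ (s.map Sum.inl) (Sum.inr a :: t.map Sum.inl) := by
  induction s generalizing t with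
  | nil => exact absurd ht (by simp [dWord])
  | cons x s ih =>
    rcases ht with h | h
    · obtain ⟨u, hu, v, hv, rfl⟩ := mem_lcat.mp h
      rw [Set.mem_singleton_iff] at hv
      refine Relation.ReflTransGen.single ?_
      have h2 := GStep.prod (o := o) (δ := δ) [] (List.map Sum.inl s) x a u hu
      rw [hv]
      simpa using h2
    · rw [mem_lcat_iB] at h
      refine Relation.ReflTransGen.head ?_ (ih h.2)
      have := GStep.eps (o := o) (δ := δ) [] (s.map Sum.inl) x h.1
      simpa using this

lemma LS_complete {w : List A} :
    ∀ {s : List X}, w ∈ LS o δ {s} →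
      GDerives o δ (s.map Sum.inl) (w.map Sum.inr) := by
  induction w with
  | nil =>
    intro s h
    have hs : oWord o s := by
      rw [mem_LS_nil] at h
      obtain ⟨s', hs', h⟩ := h
      rw [Set.mem_singleton_iff] at hs'; subst hs'
      exact h
    simpa using derives_eps o δ hs
  | cons a w ih =>
    intro s h
    rw [mem_LS_cons, mem_LS] at h
    obtain ⟨t, ht, hw⟩ := h
    rw [mem_dSet] at ht
    obtain ⟨s', hs', ht⟩ := ht
    rw [Set.mem_singleton_iff] at hs'; subst hs'
    refine Relation.ReflTransGen.trans (derives_head o δ ht) ?_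
    have := GDerives_append_left o δ [Sum.inr a] (ih hw)
    simpa [GDerives] using this

end GrammarAutomaton

/-- The language assigned by the final homomorphism to a finite `S ∈ P_ω(X*)`
in the grammar automaton, `⟦S⟧ = { w | ô(S_w) = 1 }`, equals
`⋃_{s ∈ S} { w ∈ A* | s ⇒* w }`. -/
theorem language_of_grammar_automaton {X A : Type} [Finite X]
    (o : X → Prop) (δ : X → A → Set (List X))
    (hfin : ∀ x a, (δ x a).Finite)
    (S : Set (List X)) (hS : S.Finite) :
    {w : List A | oSet o (dSetWord o δ S w)} =
      ⋃ s ∈ S, {w : List A | GDerives o δ (s.map Sum.inl) (w.map Sum.inr)} := by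
  ext w
  simp only [Set.mem_iUnion, Set.mem_setOf_eq]
  constructor
  · intro h
    obtain ⟨s, hs, hw⟩ := (mem_LS o δ).mp h
    exact ⟨s, hs, LS_complete o δ hw⟩
  · rintro ⟨s, hs, hd⟩
    have hmem : w ∈ Sem o δ (s.map Sum.inl) := GDerives_mem_Sem o δ hd
    rw [Sem_inl] at hmem
    exact (mem_LS o δ).mpr ⟨s, hs, hmem⟩
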